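/- In any labelled transition system, if p ∼_k q for all k ∈ ℕ and the system is image-finite (each state has finitely many c-successors for each action c), then p and q are bisimilar; i.e., ∼ = ⋂_k ∼_k on image-finite systems. -/

import Mathlib

variable {State Action : Type*}

/-- Stratified bisimulation approximants for an arbitrary LTS `stp`. -/
def approx (stp : State → Action → State → Prop) : ℕ → State → State → Prop
  | 0, _, _ => True
  | k + 1, p, q =>
    (∀ c p', stp p c p' → ∃ q', stp q c q' ∧ approx stp k p' q') ∧
    (∀ c q', stp q c q' → ∃ p', stp p c p' ∧ approx stp k p' q')

def IsBisim (stp : State → Action → State → Prop) (R : State → State → Prop) : Prop :=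
  ∀ p q, R p q →
    (∀ c p', stp p c p' → ∃ q', stp q c q' ∧ R p' q') ∧
    (∀ c q', stp q c q' → ∃ p', stp p c p' ∧ R p' q')

def Bisimilar (stp : State → Action → State → Prop) (p q : State) : Prop :=
  ∃ R, IsBisim stp R ∧ R p q

lemma approx_anti (stp : State → Action → State → Prop) :
    ∀ k m, k ≤ m → ∀ p q, approx stp m p q → approx stp k p q := by
  intro k
  induction k with
  | zero => intro m _ p q _; trivial
  | succ k ih =>
    intro m hm p q h
    obtain ⟨m, rfl⟩ : ∃ m', m = m' + 1 := ⟨m - 1, by omega⟩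
    obtain ⟨h1, h2⟩ := h
    constructor
    · intro c p' hp'
      obtain ⟨q', hq', hr⟩ := h1 c p' hp'
      exact ⟨q', hq', ih m (by omega) _ _ hr⟩
    · intro c q' hq'
      obtain ⟨p', hp', hr⟩ := h2 c q' hq'
      exact ⟨p', hp', ih m (by omega) _ _ hr⟩

lemma approx_of_bisim (stp : State → Action → State → Prop) :
    ∀ k p q, Bisimilar stp p q → approx stp k p q := by
  intro k
  induction k with
  | zero => intro p q _; trivial
  | succ k ih =>
    rintro p q ⟨R, hR, hpq⟩
    obtain ⟨h1, h2⟩ := hR p q hpq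
    constructor
    · intro c p' hp'
      obtain ⟨q', hq', hr⟩ := h1 c p' hp'
      exact ⟨q', hq', ih _ _ ⟨R, hR, hr⟩⟩
    · intro c q' hq'
      obtain ⟨p', hp', hr⟩ := h2 c q' hq'
      exact ⟨p', hp', ih _ _ ⟨R, hR, hr⟩⟩

theorem bisim_eq_iInter_approx (stp : State → Action → State → Prop)
    (himg : ∀ (s : State) (c : Action), {t | stp s c t}.Finite) :
    ∀ p q : State, (∀ k : ℕ, approx stp k p q) ↔ Bisimilar stp p q := by
  intro p q
  constructor
  · intro h
    refine ⟨fun p q => ∀ k, approx stp k p q, ?_, h⟩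
    intro p q hpq
    constructor
    · intro c p' hp'
      by_contra hcon
      push_neg at hcon
      -- for each q' ∈ succ q, pick k with ¬ approx k p' q'
      have hfin := himg q c
      have hk : ∀ q' : {t | stp q c t}, ∃ k, ¬ approx stp k p' q' := by
        rintro ⟨q', hq'⟩
        exact hcon q' hq'
      choose f hf using hk
      have : Finite {t | stp q c t} := hfin
      obtain ⟨N, hN⟩ := Finite.exists_le f
      obtain ⟨q', hq', hr⟩ := (hpq (N + 1)).1 c p' hp'
      exact hf ⟨q', hq'⟩ (approx_anti stp _ _ (hN ⟨q', hq'⟩) _ _ hr)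
    · intro c q' hq'
      by_contra hcon
      push_neg at hcon
      have hfin := himg p c
      have hk : ∀ p' : {t | stp p c t}, ∃ k, ¬ approx stp k p' q' := by
        rintro ⟨p', hp'⟩
        exact hcon p' hp'
      choose f hf using hk
      have : Finite {t | stp p c t} := hfin
      obtain ⟨N, hN⟩ := Finite.exists_le f
      obtain ⟨p', hp', hr⟩ := (hpq (N + 1)).2 c q' hq'
      exact hf ⟨p', hp'⟩ (approx_anti stp _ _ (hN ⟨p', hp'⟩) _ _ hr)
  · intro h k
    exact approx_of_bisim stp k p q h
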